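/- Let f : [a,b] → ℂ be Lebesgue integrable with Re f(t) > 0 and |Im f(t)| ≤ (tan θ) · Re f(t) for a.e. t ∈ [a,b], where θ ∈ (0, π/2). Then cos θ · ∫ₐᵇ |f(t)| dt ≤ |∫ₐᵇ f(t) dt| (Karamata's inequality). -/

import Mathlib

open MeasureTheory

lemma key_pt {θ : ℝ} (hc : 0 < Real.cos θ) {z : ℂ} (hre : 0 < z.re)
    (him : |z.im| ≤ Real.tan θ * z.re) :
    Real.cos θ * ‖z‖ ≤ z.re := by
  have habs : ‖z‖ = Real.sqrt (z.re ^ 2 + z.im ^ 2) := by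
    rw [Complex.norm_def, Complex.normSq_apply]; ring_nf
  have h1 : (Real.cos θ * ‖z‖) ^ 2 ≤ z.re ^ 2 := by
    rw [habs, mul_pow, Real.sq_sqrt (by positivity)]
    have htan : Real.tan θ = Real.sin θ / Real.cos θ := Real.tan_eq_sin_div_cos θ
    have him2 : z.im ^ 2 ≤ (Real.sin θ / Real.cos θ) ^ 2 * z.re ^ 2 := by
      rw [← mul_pow, ← htan]
      calc z.im ^ 2 = |z.im| ^ 2 := (sq_abs _).symm
        _ ≤ (Real.tan θ * z.re) ^ 2 := by
            apply pow_le_pow_left₀ (abs_nonneg _) him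
    have hsc : Real.sin θ ^ 2 + Real.cos θ ^ 2 = 1 := Real.sin_sq_add_cos_sq θ
    have hc' : Real.cos θ ≠ 0 := ne_of_gt hc
    calc Real.cos θ ^ 2 * (z.re ^ 2 + z.im ^ 2)
        ≤ Real.cos θ ^ 2 * (z.re ^ 2 + (Real.sin θ / Real.cos θ) ^ 2 * z.re ^ 2) := by
          apply mul_le_mul_of_nonneg_left (by linarith) (by positivity)
      _ = (Real.cos θ ^ 2 + Real.sin θ ^ 2) * z.re ^ 2 := by
          field_simp
      _ = z.re ^ 2 := by rw [add_comm, hsc, one_mul]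
  have h2 : 0 ≤ Real.cos θ * ‖z‖ := by positivity
  nlinarith [sq_nonneg (Real.cos θ * ‖z‖ - z.re)]

theorem stmt_12 {a b : ℝ} {f : ℝ → ℂ} (hf : IntegrableOn f (Set.Icc a b))
    {θ : ℝ} (hθ : θ ∈ Set.Ioo 0 (Real.pi / 2))
    (h : ∀ᵐ t ∂(volume.restrict (Set.Icc a b)),
      0 < (f t).re ∧ |(f t).im| ≤ Real.tan θ * (f t).re) :
    Real.cos θ * ∫ t in Set.Icc a b, ‖f t‖ ≤
      ‖∫ t in Set.Icc a b, f t‖ := by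
  have hc : 0 < Real.cos θ := Real.cos_pos_of_mem_Ioo
    ⟨by linarith [hθ.1, Real.pi_pos], hθ.2⟩
  have habs : Integrable (fun t => ‖f t‖) (volume.restrict (Set.Icc a b)) := by
    simpa [Complex.norm_def] using hf.norm
  have hre : Integrable (fun t => (f t).re) (volume.restrict (Set.Icc a b)) := hf.re
  have step1 : Real.cos θ * ∫ t in Set.Icc a b, ‖f t‖
      ≤ ∫ t in Set.Icc a b, (f t).re := by
    rw [← integral_const_mul]
    apply integral_mono_ae (habs.const_mul _) hre
    filter_upwards [h] with t ht
    exact key_pt hc ht.1 ht.2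
  have step2 : (∫ t in Set.Icc a b, (f t).re) ≤ ‖∫ t in Set.Icc a b, f t‖ := by
    have := integral_re (𝕜 := ℂ) hf
    simp only [RCLike.re_to_complex] at this
    rw [this]
    exact (Complex.abs_re_le_norm _).trans' (le_abs_self _)
  linarith
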